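/- Let G be a finite group, N = S₁ × ⋯ × S_t a normal subgroup that is a direct product of nonabelian simple groups S_i permuted transitively by conjugation in G, and let Q = P ∩ N for P a Sylow p-subgroup of G, where Q ∩ S_i ≠ 1 for each i. Then C_G(Q) ≤ M := ⋂ᵢ N_G(S_i). -/

import Mathlib

/-- Let `N = S₁ × ⋯ × S_t ⊴ G` be a direct product of nonabelian simple subgroups permuted
(transitively) by conjugation in `G`, and let `Q = P ∩ N` for `P ∈ Syl_p(G)` with
`Q ∩ Sᵢ ≠ 1` for each `i`.  Then `C_G(Q) ≤ M = ⋂ᵢ N_G(Sᵢ)`. -/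
theorem stmt_10 {G : Type*} [Group G] [Finite G] {p : ℕ} [Fact p.Prime]
    (t : ℕ) (ht : 0 < t) (S : Fin t → Subgroup G) (N : Subgroup G) (hN : N.Normal)
    (hNeq : N = ⨆ i, S i)
    (hsimple : ∀ i, IsSimpleGroup (S i))
    (hnonab : ∀ i, ∃ a b : S i, a * b ≠ b * a)
    (hperm : ∀ (g : G) (i : Fin t), ∃ j, (S i).map (MulAut.conj g).toMonoidHom = S j)
    (hdisj : ∀ i j, i ≠ j → S i ⊓ S j = ⊥)
    (P : Sylow p G) (Q : Subgroup G) (hQ : Q = (P : Subgroup G) ⊓ N)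
    (hQi : ∀ i, Q ⊓ S i ≠ ⊥) :
    Subgroup.centralizer (Q : Set G) ≤ ⨅ i, Subgroup.normalizer (S i : Set G) := by
  intro x hx
  rw [Subgroup.mem_centralizer_iff] at hx
  simp only [Subgroup.mem_iInf]
  intro i
  obtain ⟨j, hj⟩ := hperm x i
  have hji : j = i := by
    by_contra hne
    apply hQi i
    rw [eq_bot_iff]
    intro q hq
    have hcomm := hx q hq.1
    have hqj : q ∈ S j := by
      rw [← hj]
      refine ⟨q, hq.2, ?_⟩
      simp only [MulEquiv.toMonoidHom_eq_coe, MonoidHom.coe_coe, MulAut.conj_apply]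
      rw [← hcomm]
      group
    have : q ∈ S i ⊓ S j := ⟨hq.2, hqj⟩
    rwa [hdisj i j (Ne.symm hne)] at this
  subst hji
  rw [Subgroup.mem_normalizer_iff]
  intro h
  constructor
  · intro hh
    rw [← hj]
    exact ⟨h, hh, rfl⟩
  · intro hh
    rw [← hj] at hh
    obtain ⟨y, hy, hyx⟩ := hh
    simp only [MulEquiv.toMonoidHom_eq_coe, MonoidHom.coe_coe, MulAut.conj_apply] at hyx
    have : y = h := mul_left_cancel (mul_right_cancel hyx)
    rwa [← this]
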